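/- Let g and h be completely multiplicative arithmetic functions and f = g * h. Then for all positive integers n_1, n_2, n_3: f(n_1 n_2 n_3) = ∑_{a_1 | n_1, a_2 | n_2, a_3 | n_3} f(n_1/a_1) f(n_2/a_2) f(n_3/a_3) ψ(a_1, a_2, a_3), where ψ is the three-variable multiplicative function with ψ(1,1,1) = 1, ψ(p,p,1) = ψ(p,1,p) = ψ(1,p,p) = −g(p)h(p), ψ(p,p,p) = g(p)h(p)f(p), and ψ(p^{ν_1}, p^{ν_2}, p^{ν_3}) = 0 for all other prime-power triples with ν_1 + ν_2 + ν_3 ≥ 1. -/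

import Mathlib

open Finset

lemma BR3gpow (g : ℕ → ℂ) (hg1 : g 1 = 1) (hg : ∀ m n : ℕ, g (m * n) = g m * g n)
    (p k : ℕ) : g (p ^ k) = g p ^ k := by
  induction k with
  | zero => simpa using hg1
  | succ k ih => rw [pow_succ, hg, ih, pow_succ]

lemma BR3f1 (g h f : ℕ → ℂ) (hg1 : g 1 = 1) (hh1 : h 1 = 1)
    (hf : ∀ n : ℕ, f n = ∑ d ∈ n.divisors, g d * h (n / d)) : f 1 = 1 := by
  rw [hf]; simp [hg1, hh1]

lemma BR3fpk (g h f : ℕ → ℂ)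
    (hg1 : g 1 = 1) (hg : ∀ m n : ℕ, g (m * n) = g m * g n)
    (hh1 : h 1 = 1) (hh : ∀ m n : ℕ, h (m * n) = h m * h n)
    (hf : ∀ n : ℕ, f n = ∑ d ∈ n.divisors, g d * h (n / d))
    (p : ℕ) (hp : p.Prime) (k : ℕ) :
    f (p ^ k) = ∑ i ∈ Finset.range (k + 1), g p ^ i * h p ^ (k - i) := by
  rw [hf, Nat.sum_divisors_prime_pow hp]
  refine Finset.sum_congr rfl fun i hi => ?_
  rw [Finset.mem_range] at hi
  rw [Nat.pow_div (Nat.lt_succ_iff.mp hi) hp.pos, BR3gpow g hg1 hg, BR3gpow h hh1 hh]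

section Rec
variable (g h f : ℕ → ℂ)
    (hg1 : g 1 = 1) (hg : ∀ m n : ℕ, g (m * n) = g m * g n)
    (hh1 : h 1 = 1) (hh : ∀ m n : ℕ, h (m * n) = h m * h n)
    (hf : ∀ n : ℕ, f n = ∑ d ∈ n.divisors, g d * h (n / d))
    (p : ℕ) (hp : p.Prime)

include hg1 hg hh1 hh hf hp

lemma BR3fp : f p = g p + h p := by
  have := BR3fpk g h f hg1 hg hh1 hh hf p hp 1
  simpa [Finset.sum_range_succ, add_comm] using this

lemma BR3R (k : ℕ) : f (p ^ (k + 1)) = g p ^ (k + 1) + h p * f (p ^ k) := by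
  rw [BR3fpk g h f hg1 hg hh1 hh hf p hp (k + 1), BR3fpk g h f hg1 hg hh1 hh hf p hp k,
    Finset.sum_range_succ, Nat.sub_self, pow_zero, mul_one, Finset.mul_sum, add_comm]
  congr 1
  refine Finset.sum_congr rfl fun i hi => ?_
  rw [Finset.mem_range] at hi
  rw [show k + 1 - i = (k - i) + 1 from by omega, pow_succ]
  ring

lemma BR3R2 (k : ℕ) :
    f (p ^ (k + 2)) = f p * f (p ^ (k + 1)) - g p * h p * f (p ^ k) := by
  have r1 := BR3R g h f hg1 hg hh1 hh hf p hp (k + 1)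
  have r0 := BR3R g h f hg1 hg hh1 hh hf p hp k
  have fp1 := BR3fp g h f hg1 hg hh1 hh hf p hp
  have : (g p : ℂ) ^ (k + 2) = g p * g p ^ (k + 1) := by ring
  linear_combination r1 - g p * r0 - f (p ^ (k + 1)) * fp1 + this

lemma BR3L2 : ∀ b a : ℕ, f (p ^ (a + b + 2)) =
    f (p ^ (a + 1)) * f (p ^ (b + 1)) - g p * h p * (f (p ^ a) * f (p ^ b)) := by
  intro b
  induction b with
  | zero =>
    intro a
    have r2 := BR3R2 g h f hg1 hg hh1 hh hf p hp a
    have f1 : f 1 = 1 := BR3f1 g h f hg1 hh1 hf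
    simp only [Nat.zero_add, pow_one, pow_zero, f1, mul_one, Nat.add_zero]
    linear_combination r2
  | succ b ih =>
    intro a
    have h1 := ih (a + 1)
    have h2 := BR3R2 g h f hg1 hg hh1 hh hf p hp a
    have h3 := BR3R2 g h f hg1 hg hh1 hh hf p hp b
    have e : a + (b + 1) + 2 = a + 1 + b + 2 := by ring
    rw [e]
    linear_combination h1 + f (p ^ (b + 1)) * h2 - f (p ^ (a + 1)) * h3

lemma BR3S : ∀ a b : ℕ, f (p ^ (a + b + 1)) =
    f (p ^ (a + 1)) * f (p ^ b) + f (p ^ a) * f (p ^ (b + 1))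
      - f p * (f (p ^ a) * f (p ^ b)) := by
  intro a b
  rcases b with _ | b
  · have f1 : f 1 = 1 := BR3f1 g h f hg1 hh1 hf
    simp only [pow_zero, pow_one, f1, mul_one, Nat.add_zero]
    ring_nf
  · have h1 := BR3L2 g h f hg1 hg hh1 hh hf p hp b a
    have h3 := BR3R2 g h f hg1 hg hh1 hh hf p hp b
    have e : a + (b + 1) + 1 = a + b + 2 := by ring
    rw [e]
    linear_combination h1 - f (p ^ a) * h3

end Rec
lemma BR3collapse (t : ℕ → ℂ) (ht : ∀ i, 2 ≤ i → t i = 0) (e : ℕ) :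
    ∑ i ∈ Finset.range (e + 1), t i = t 0 + if e = 0 then 0 else t 1 := by
  induction e with
  | zero => simp
  | succ e ih =>
    rw [Finset.sum_range_succ, ih]
    rcases e with _ | e
    · simp
    · rw [ht (e + 1 + 1) (by omega)]; simp

lemma BR3split {m n : ℕ} (hmn : Nat.Coprime m n) (t : ℕ → ℂ) :
    ∑ d ∈ (m * n).divisors, t d = ∑ b ∈ m.divisors, ∑ c ∈ n.divisors, t (b * c) := by
  rw [Nat.divisors_mul, Finset.mul_def, Finset.sum_image, Finset.sum_product]
  rintro ⟨b₁, c₁⟩ hx ⟨b₂, c₂⟩ hy hxy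
  simp only [Finset.mem_coe, Finset.mem_product, Nat.mem_divisors] at hx hy
  simp only at hxy
  have cop12 : Nat.Coprime b₁ c₂ :=
    Nat.Coprime.coprime_dvd_right hy.2.1 (Nat.Coprime.coprime_dvd_left hx.1.1 hmn)
  have cop21 : Nat.Coprime b₂ c₁ :=
    Nat.Coprime.coprime_dvd_right hx.2.1 (Nat.Coprime.coprime_dvd_left hy.1.1 hmn)
  have hb : b₁ = b₂ := by
    refine Nat.dvd_antisymm ?_ ?_
    · exact cop12.dvd_of_dvd_mul_right ⟨c₁, hxy.symm⟩
    · exact cop21.dvd_of_dvd_mul_right ⟨c₂, hxy⟩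
  have hbpos : 0 < b₁ := Nat.pos_of_ne_zero (fun h => hx.1.2 (by simpa [h] using hx.1.1))
  have hc : c₁ = c₂ := by
    subst hb
    exact Nat.eq_of_mul_eq_mul_left hbpos hxy
  simp [hb, hc]

lemma BR3six (s₁ s₂ s₃ t₁ t₂ t₃ : Finset ℕ) (X Y : ℕ → ℕ → ℕ → ℂ) :
    (∑ b₁ ∈ s₁, ∑ c₁ ∈ t₁, ∑ b₂ ∈ s₂, ∑ c₂ ∈ t₂, ∑ b₃ ∈ s₃, ∑ c₃ ∈ t₃,
        X b₁ b₂ b₃ * Y c₁ c₂ c₃) =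
      (∑ b₁ ∈ s₁, ∑ b₂ ∈ s₂, ∑ b₃ ∈ s₃, X b₁ b₂ b₃) *
        (∑ c₁ ∈ t₁, ∑ c₂ ∈ t₂, ∑ c₃ ∈ t₃, Y c₁ c₂ c₃) := by
  have e3 : ∀ b₁ c₁ : ℕ,
      (∑ b₂ ∈ s₂, ∑ c₂ ∈ t₂, ∑ b₃ ∈ s₃, ∑ c₃ ∈ t₃, X b₁ b₂ b₃ * Y c₁ c₂ c₃)
        = (∑ b₂ ∈ s₂, ∑ b₃ ∈ s₃, X b₁ b₂ b₃) * (∑ c₂ ∈ t₂, ∑ c₃ ∈ t₃, Y c₁ c₂ c₃) := by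
    intro b₁ c₁
    rw [Finset.sum_mul_sum]
    exact Finset.sum_congr rfl fun b₂ _ => Finset.sum_congr rfl fun c₂ _ =>
      (Finset.sum_mul_sum _ _ _ _).symm
  rw [Finset.sum_mul_sum]
  exact Finset.sum_congr rfl fun b₁ _ => Finset.sum_congr rfl fun c₁ _ => e3 b₁ c₁

lemma BR3PP (g h f : ℕ → ℂ)
    (hg1 : g 1 = 1) (hg : ∀ m n : ℕ, g (m * n) = g m * g n)
    (hh1 : h 1 = 1) (hh : ∀ m n : ℕ, h (m * n) = h m * h n)
    (hf : ∀ n : ℕ, f n = ∑ d ∈ n.divisors, g d * h (n / d))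
    (ψ : ℕ → ℕ → ℕ → ℂ)
    (hψ1 : ψ 1 1 1 = 1)
    (hψa : ∀ p : ℕ, p.Prime → ψ p p 1 = -(g p * h p))
    (hψb : ∀ p : ℕ, p.Prime → ψ p 1 p = -(g p * h p))
    (hψc : ∀ p : ℕ, p.Prime → ψ 1 p p = -(g p * h p))
    (hψd : ∀ p : ℕ, p.Prime → ψ p p p = g p * h p * f p)
    (hψ0 : ∀ p : ℕ, p.Prime → ∀ ν₁ ν₂ ν₃ : ℕ, 1 ≤ ν₁ + ν₂ + ν₃ →
      ¬(ν₁ = 1 ∧ ν₂ = 1 ∧ ν₃ = 0) → ¬(ν₁ = 1 ∧ ν₂ = 0 ∧ ν₃ = 1) →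
      ¬(ν₁ = 0 ∧ ν₂ = 1 ∧ ν₃ = 1) → ¬(ν₁ = 1 ∧ ν₂ = 1 ∧ ν₃ = 1) →
      ψ (p ^ ν₁) (p ^ ν₂) (p ^ ν₃) = 0)
    (p : ℕ) (hp : p.Prime) (e₁ e₂ e₃ : ℕ) :
    f (p ^ (e₁ + e₂ + e₃)) =
      ∑ a₁ ∈ (p ^ e₁).divisors, ∑ a₂ ∈ (p ^ e₂).divisors, ∑ a₃ ∈ (p ^ e₃).divisors,
        f (p ^ e₁ / a₁) * f (p ^ e₂ / a₂) * f (p ^ e₃ / a₃) * ψ a₁ a₂ a₃ := by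
  have f1 : f 1 = 1 := BR3f1 g h f hg1 hh1 hf
  have hψz : ∀ i j k : ℕ, (2 ≤ i ∨ 2 ≤ j ∨ 2 ≤ k ∨ i + j + k = 1) →
      ψ (p ^ i) (p ^ j) (p ^ k) = 0 := fun i j k hc =>
    hψ0 p hp i j k (by omega) (by omega) (by omega) (by omega) (by omega)
  have hdiv : ∀ k : ℕ, p ^ (k + 1) / p = p ^ k := fun k => by
    rw [pow_succ, Nat.mul_div_cancel _ hp.pos]
  have z100 : ψ p 1 1 = 0 := by simpa using hψz 1 0 0 (by omega)
  have z010 : ψ 1 p 1 = 0 := by simpa using hψz 0 1 0 (by omega)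
  have z001 : ψ 1 1 p = 0 := by simpa using hψz 0 0 1 (by omega)
  simp only [Nat.sum_divisors_prime_pow hp]
  have step1 : ∀ i j : ℕ,
      (∑ k ∈ Finset.range (e₃ + 1),
        f (p ^ e₁ / p ^ i) * f (p ^ e₂ / p ^ j) * f (p ^ e₃ / p ^ k) * ψ (p ^ i) (p ^ j) (p ^ k))
      = f (p ^ e₁ / p ^ i) * f (p ^ e₂ / p ^ j) * f (p ^ e₃ / p ^ 0) * ψ (p ^ i) (p ^ j) (p ^ 0)
        + if e₃ = 0 then 0 else
          f (p ^ e₁ / p ^ i) * f (p ^ e₂ / p ^ j) * f (p ^ e₃ / p ^ 1) * ψ (p ^ i) (p ^ j) (p ^ 1) :=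
    fun i j => BR3collapse _ (fun k hk => by rw [hψz i j k (by omega), mul_zero]) e₃
  simp only [step1]
  have step2 : ∀ i : ℕ,
      (∑ j ∈ Finset.range (e₂ + 1),
        (f (p ^ e₁ / p ^ i) * f (p ^ e₂ / p ^ j) * f (p ^ e₃ / p ^ 0) * ψ (p ^ i) (p ^ j) (p ^ 0)
        + if e₃ = 0 then 0 else
          f (p ^ e₁ / p ^ i) * f (p ^ e₂ / p ^ j) * f (p ^ e₃ / p ^ 1) * ψ (p ^ i) (p ^ j) (p ^ 1)))
      = (f (p ^ e₁ / p ^ i) * f (p ^ e₂ / p ^ 0) * f (p ^ e₃ / p ^ 0) * ψ (p ^ i) (p ^ 0) (p ^ 0)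
        + if e₃ = 0 then 0 else
          f (p ^ e₁ / p ^ i) * f (p ^ e₂ / p ^ 0) * f (p ^ e₃ / p ^ 1) * ψ (p ^ i) (p ^ 0) (p ^ 1))
        + if e₂ = 0 then 0 else
          (f (p ^ e₁ / p ^ i) * f (p ^ e₂ / p ^ 1) * f (p ^ e₃ / p ^ 0) * ψ (p ^ i) (p ^ 1) (p ^ 0)
          + if e₃ = 0 then 0 else
            f (p ^ e₁ / p ^ i) * f (p ^ e₂ / p ^ 1) * f (p ^ e₃ / p ^ 1) * ψ (p ^ i) (p ^ 1) (p ^ 1)) :=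
    fun i => BR3collapse _
      (fun j hj => by
        have a0 := hψz i j 0 (by omega); have a1 := hψz i j 1 (by omega)
        simp only [pow_zero, pow_one] at a0 a1
        simp [a0, a1]) e₂
  simp only [step2]
  rw [BR3collapse _ (fun i hi => by
    have a00 := hψz i 0 0 (by omega); have a01 := hψz i 0 1 (by omega)
    have a10 := hψz i 1 0 (by omega); have a11 := hψz i 1 1 (by omega)
    simp only [pow_zero, pow_one] at a00 a01 a10 a11
    simp [a00, a01, a10, a11]) e₁]
  have hcase : ∀ e : ℕ, e = 0 ∨ ∃ a, e = a + 1 := fun e => by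
    rcases e with _ | a
    · exact Or.inl rfl
    · exact Or.inr ⟨a, rfl⟩
  have L2 := BR3L2 g h f hg1 hg hh1 hh hf p hp
  have Sl := BR3S g h f hg1 hg hh1 hh hf p hp
  rcases hcase e₁ with rfl | ⟨a, rfl⟩ <;> rcases hcase e₂ with rfl | ⟨b, rfl⟩ <;>
    rcases hcase e₃ with rfl | ⟨c, rfl⟩
  · simp [f1, hψ1]
  · simp [f1, hψ1, z001, hdiv]
  · simp [f1, hψ1, z010, hdiv]
  · rw [show 0 + (b + 1) + (c + 1) = b + c + 2 from by omega]
    have key := L2 c b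
    simp [f1, hψ1, z010, z001, hψc p hp, hdiv]
    linear_combination key
  · simp [f1, hψ1, z100, hdiv]
  · rw [show a + 1 + 0 + (c + 1) = a + c + 2 from by omega]
    have key := L2 c a
    simp [f1, hψ1, z100, z001, hψb p hp, hdiv]
    linear_combination key
  · rw [show a + 1 + (b + 1) + 0 = a + b + 2 from by omega]
    have key := L2 b a
    simp [f1, hψ1, z100, z010, hψa p hp, hdiv]
    linear_combination key
  · rw [show a + 1 + (b + 1) + (c + 1) = a + b + c + 3 from by omega]
    have h1 := L2 c (a + b + 1)
    rw [show a + b + 1 + c + 2 = a + b + c + 3 from by omega,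
      show a + b + 1 + 1 = a + b + 2 from by omega] at h1
    have h2 := L2 b a
    have h3 := Sl a b
    simp [f1, hψ1, z100, z010, z001, hψa p hp, hψb p hp, hψc p hp, hψd p hp, hdiv]
    linear_combination h1 + f (p ^ (c + 1)) * h2 - g p * h p * f (p ^ c) * h3

lemma BR3mult (g h f : ℕ → ℂ)
    (hg1 : g 1 = 1) (hg : ∀ m n : ℕ, g (m * n) = g m * g n)
    (hh1 : h 1 = 1) (hh : ∀ m n : ℕ, h (m * n) = h m * h n)
    (hf : ∀ n : ℕ, f n = ∑ d ∈ n.divisors, g d * h (n / d))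
    {a b : ℕ} (hab : Nat.Coprime a b) : f (a * b) = f a * f b := by
  rw [hf (a * b), BR3split hab, hf a, hf b, Finset.sum_mul_sum]
  refine Finset.sum_congr rfl fun x hx => Finset.sum_congr rfl fun y hy => ?_
  rw [Nat.mem_divisors] at hx hy
  rw [hg, ← Nat.div_mul_div_comm hx.1 hy.1, hh]
  ring

theorem busche_ramanujan_three_vars (g h f : ℕ → ℂ)
    (hg1 : g 1 = 1) (hg : ∀ m n : ℕ, g (m * n) = g m * g n)
    (hh1 : h 1 = 1) (hh : ∀ m n : ℕ, h (m * n) = h m * h n)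
    (hf : ∀ n : ℕ, f n = ∑ d ∈ n.divisors, g d * h (n / d))
    (ψ : ℕ → ℕ → ℕ → ℂ)
    (hψmul : ∀ m₁ m₂ m₃ n₁ n₂ n₃ : ℕ, Nat.gcd (m₁ * m₂ * m₃) (n₁ * n₂ * n₃) = 1 →
      ψ (m₁ * n₁) (m₂ * n₂) (m₃ * n₃) = ψ m₁ m₂ m₃ * ψ n₁ n₂ n₃)
    (hψ1 : ψ 1 1 1 = 1)
    (hψa : ∀ p : ℕ, p.Prime → ψ p p 1 = -(g p * h p))
    (hψb : ∀ p : ℕ, p.Prime → ψ p 1 p = -(g p * h p))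
    (hψc : ∀ p : ℕ, p.Prime → ψ 1 p p = -(g p * h p))
    (hψd : ∀ p : ℕ, p.Prime → ψ p p p = g p * h p * f p)
    (hψ0 : ∀ p : ℕ, p.Prime → ∀ ν₁ ν₂ ν₃ : ℕ, 1 ≤ ν₁ + ν₂ + ν₃ →
      ¬(ν₁ = 1 ∧ ν₂ = 1 ∧ ν₃ = 0) → ¬(ν₁ = 1 ∧ ν₂ = 0 ∧ ν₃ = 1) →
      ¬(ν₁ = 0 ∧ ν₂ = 1 ∧ ν₃ = 1) → ¬(ν₁ = 1 ∧ ν₂ = 1 ∧ ν₃ = 1) →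
      ψ (p ^ ν₁) (p ^ ν₂) (p ^ ν₃) = 0)
    (n₁ n₂ n₃ : ℕ) (hn₁ : 0 < n₁) (hn₂ : 0 < n₂) (hn₃ : 0 < n₃) :
    f (n₁ * n₂ * n₃) = ∑ a₁ ∈ n₁.divisors, ∑ a₂ ∈ n₂.divisors, ∑ a₃ ∈ n₃.divisors,
      f (n₁ / a₁) * f (n₂ / a₂) * f (n₃ / a₃) * ψ a₁ a₂ a₃ := by
  have f1 : f 1 = 1 := BR3f1 g h f hg1 hh1 hf
  have fmult : ∀ {a b : ℕ}, Nat.Coprime a b → f (a * b) = f a * f b :=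
    fun {a b} hab => BR3mult g h f hg1 hg hh1 hh hf hab
  suffices H : ∀ N : ℕ, ∀ n₁ n₂ n₃ : ℕ, n₁ * n₂ * n₃ ≤ N → 0 < n₁ → 0 < n₂ → 0 < n₃ →
      f (n₁ * n₂ * n₃) = ∑ a₁ ∈ n₁.divisors, ∑ a₂ ∈ n₂.divisors, ∑ a₃ ∈ n₃.divisors,
        f (n₁ / a₁) * f (n₂ / a₂) * f (n₃ / a₃) * ψ a₁ a₂ a₃ by
    exact H (n₁ * n₂ * n₃) n₁ n₂ n₃ le_rfl hn₁ hn₂ hn₃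
  intro N
  induction N with
  | zero =>
    intro n₁ n₂ n₃ hle h1 h2 h3
    exfalso
    have : 0 < n₁ * n₂ * n₃ := by positivity
    omega
  | succ N ih =>
    intro n₁ n₂ n₃ hle h1 h2 h3
    by_cases hone : n₁ * n₂ * n₃ = 1
    · have e1 : n₁ * n₂ = 1 := Nat.eq_one_of_mul_eq_one_right hone
      have e3 : n₃ = 1 := Nat.eq_one_of_mul_eq_one_left hone
      have e1' : n₁ = 1 := Nat.eq_one_of_mul_eq_one_right e1
      have e2 : n₂ = 1 := Nat.eq_one_of_mul_eq_one_left e1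
      subst e1' e2 e3
      simp [Nat.divisors_one, f1, hψ1]
    · set p := (n₁ * n₂ * n₃).minFac with hpdef
      have hp : p.Prime := Nat.minFac_prime hone
      set e₁ := n₁.factorization p with he₁
      set e₂ := n₂.factorization p with he₂
      set e₃ := n₃.factorization p with he₃
      set m₁ := n₁ / p ^ e₁ with hm₁def
      set m₂ := n₂ / p ^ e₂ with hm₂def
      set m₃ := n₃ / p ^ e₃ with hm₃def
      have hd₁ : p ^ e₁ * m₁ = n₁ := Nat.ordProj_mul_ordCompl_eq_self n₁ p
      have hd₂ : p ^ e₂ * m₂ = n₂ := Nat.ordProj_mul_ordCompl_eq_self n₂ p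
      have hd₃ : p ^ e₃ * m₃ = n₃ := Nat.ordProj_mul_ordCompl_eq_self n₃ p
      have hnd₁ : ¬ p ∣ m₁ := Nat.not_dvd_ordCompl hp h1.ne'
      have hnd₂ : ¬ p ∣ m₂ := Nat.not_dvd_ordCompl hp h2.ne'
      have hnd₃ : ¬ p ∣ m₃ := Nat.not_dvd_ordCompl hp h3.ne'
      have hm₁pos : 0 < m₁ := Nat.ordCompl_pos p h1.ne'
      have hm₂pos : 0 < m₂ := Nat.ordCompl_pos p h2.ne'
      have hm₃pos : 0 < m₃ := Nat.ordCompl_pos p h3.ne'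
      have copp₁ : Nat.Coprime p m₁ := (Nat.Prime.coprime_iff_not_dvd hp).mpr hnd₁
      have copp₂ : Nat.Coprime p m₂ := (Nat.Prime.coprime_iff_not_dvd hp).mpr hnd₂
      have copp₃ : Nat.Coprime p m₃ := (Nat.Prime.coprime_iff_not_dvd hp).mpr hnd₃
      have cop₁ : Nat.Coprime (p ^ e₁) m₁ := Nat.Coprime.pow_left _ copp₁
      have cop₂ : Nat.Coprime (p ^ e₂) m₂ := Nat.Coprime.pow_left _ copp₂
      have cop₃ : Nat.Coprime (p ^ e₃) m₃ := Nat.Coprime.pow_left _ copp₃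
      have copM : Nat.Coprime p (m₁ * m₂ * m₃) := (copp₁.mul_right copp₂).mul_right copp₃
      have copP : Nat.Coprime (p ^ (e₁ + e₂ + e₃)) (m₁ * m₂ * m₃) := copM.pow_left _
      have hppe : p ^ e₁ * p ^ e₂ * p ^ e₃ = p ^ (e₁ + e₂ + e₃) := by
        rw [pow_add, pow_add]
      have copP' : Nat.Coprime (p ^ e₁ * p ^ e₂ * p ^ e₃) (m₁ * m₂ * m₃) := by
        rw [hppe]; exact copP
      have hpdvd : p ∣ n₁ * n₂ * n₃ := Nat.minFac_dvd _
      have hEpos : 1 ≤ e₁ + e₂ + e₃ := by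
        rcases (Nat.Prime.dvd_mul hp).mp hpdvd with hd | hd
        · rcases (Nat.Prime.dvd_mul hp).mp hd with hd' | hd'
          · have := hp.factorization_pos_of_dvd h1.ne' hd'; omega
          · have := hp.factorization_pos_of_dvd h2.ne' hd'; omega
        · have := hp.factorization_pos_of_dvd h3.ne' hd; omega
      have hprod : n₁ * n₂ * n₃ = p ^ (e₁ + e₂ + e₃) * (m₁ * m₂ * m₃) := by
        rw [← hd₁, ← hd₂, ← hd₃, pow_add, pow_add]; ring
      have hlt : m₁ * m₂ * m₃ ≤ N := by
        have hppow : 2 ≤ p ^ (e₁ + e₂ + e₃) :=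
          le_trans hp.two_le (Nat.le_self_pow (by omega) p)
        have h2m : 2 * (m₁ * m₂ * m₃) ≤ n₁ * n₂ * n₃ := by
          rw [hprod]; exact Nat.mul_le_mul_right _ hppow
        have hmpos : 0 < m₁ * m₂ * m₃ := by positivity
        omega
      have ihm := ih m₁ m₂ m₃ hlt hm₁pos hm₂pos hm₃pos
      have ppe := BR3PP g h f hg1 hg hh1 hh hf ψ hψ1 hψa hψb hψc hψd hψ0 p hp e₁ e₂ e₃
      rw [← hd₁, ← hd₂, ← hd₃]
      simp only [BR3split cop₁, BR3split cop₂, BR3split cop₃]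
      have reshape :
          (∑ b₁ ∈ (p ^ e₁).divisors, ∑ c₁ ∈ m₁.divisors,
            ∑ b₂ ∈ (p ^ e₂).divisors, ∑ c₂ ∈ m₂.divisors,
            ∑ b₃ ∈ (p ^ e₃).divisors, ∑ c₃ ∈ m₃.divisors,
              f (p ^ e₁ * m₁ / (b₁ * c₁)) * f (p ^ e₂ * m₂ / (b₂ * c₂)) *
                f (p ^ e₃ * m₃ / (b₃ * c₃)) * ψ (b₁ * c₁) (b₂ * c₂) (b₃ * c₃))
          = ∑ b₁ ∈ (p ^ e₁).divisors, ∑ c₁ ∈ m₁.divisors,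
            ∑ b₂ ∈ (p ^ e₂).divisors, ∑ c₂ ∈ m₂.divisors,
            ∑ b₃ ∈ (p ^ e₃).divisors, ∑ c₃ ∈ m₃.divisors,
              (f (p ^ e₁ / b₁) * f (p ^ e₂ / b₂) * f (p ^ e₃ / b₃) * ψ b₁ b₂ b₃) *
                (f (m₁ / c₁) * f (m₂ / c₂) * f (m₃ / c₃) * ψ c₁ c₂ c₃) := by
        refine Finset.sum_congr rfl fun b₁ hb₁ => Finset.sum_congr rfl fun c₁ hc₁ =>
          Finset.sum_congr rfl fun b₂ hb₂ => Finset.sum_congr rfl fun c₂ hc₂ =>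
          Finset.sum_congr rfl fun b₃ hb₃ => Finset.sum_congr rfl fun c₃ hc₃ => ?_
        rw [Nat.mem_divisors] at hb₁ hb₂ hb₃ hc₁ hc₂ hc₃
        have d1 : p ^ e₁ * m₁ / (b₁ * c₁) = p ^ e₁ / b₁ * (m₁ / c₁) :=
          (Nat.div_mul_div_comm hb₁.1 hc₁.1).symm
        have d2 : p ^ e₂ * m₂ / (b₂ * c₂) = p ^ e₂ / b₂ * (m₂ / c₂) :=
          (Nat.div_mul_div_comm hb₂.1 hc₂.1).symm
        have d3 : p ^ e₃ * m₃ / (b₃ * c₃) = p ^ e₃ / b₃ * (m₃ / c₃) :=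
          (Nat.div_mul_div_comm hb₃.1 hc₃.1).symm
        have fm1 : f (p ^ e₁ / b₁ * (m₁ / c₁)) = f (p ^ e₁ / b₁) * f (m₁ / c₁) :=
          fmult (Nat.Coprime.coprime_dvd_right (Nat.div_dvd_of_dvd hc₁.1)
            (Nat.Coprime.coprime_dvd_left (Nat.div_dvd_of_dvd hb₁.1) cop₁))
        have fm2 : f (p ^ e₂ / b₂ * (m₂ / c₂)) = f (p ^ e₂ / b₂) * f (m₂ / c₂) :=
          fmult (Nat.Coprime.coprime_dvd_right (Nat.div_dvd_of_dvd hc₂.1)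
            (Nat.Coprime.coprime_dvd_left (Nat.div_dvd_of_dvd hb₂.1) cop₂))
        have fm3 : f (p ^ e₃ / b₃ * (m₃ / c₃)) = f (p ^ e₃ / b₃) * f (m₃ / c₃) :=
          fmult (Nat.Coprime.coprime_dvd_right (Nat.div_dvd_of_dvd hc₃.1)
            (Nat.Coprime.coprime_dvd_left (Nat.div_dvd_of_dvd hb₃.1) cop₃))
        have hgcd : Nat.gcd (b₁ * b₂ * b₃) (c₁ * c₂ * c₃) = 1 := by
          have hbdvd : b₁ * b₂ * b₃ ∣ p ^ e₁ * p ^ e₂ * p ^ e₃ :=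
            mul_dvd_mul (mul_dvd_mul hb₁.1 hb₂.1) hb₃.1
          have hcdvd : c₁ * c₂ * c₃ ∣ m₁ * m₂ * m₃ :=
            mul_dvd_mul (mul_dvd_mul hc₁.1 hc₂.1) hc₃.1
          exact Nat.Coprime.coprime_dvd_left hbdvd
            (Nat.Coprime.coprime_dvd_right hcdvd copP')
        rw [d1, d2, d3, fm1, fm2, fm3, hψmul b₁ b₂ b₃ c₁ c₂ c₃ hgcd]
        ring
      rw [reshape, BR3six (p ^ e₁).divisors (p ^ e₂).divisors (p ^ e₃).divisors
        m₁.divisors m₂.divisors m₃.divisors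
        (fun b₁ b₂ b₃ => f (p ^ e₁ / b₁) * f (p ^ e₂ / b₂) * f (p ^ e₃ / b₃) * ψ b₁ b₂ b₃)
        (fun c₁ c₂ c₃ => f (m₁ / c₁) * f (m₂ / c₂) * f (m₃ / c₃) * ψ c₁ c₂ c₃)]
      rw [show p ^ e₁ * m₁ * (p ^ e₂ * m₂) * (p ^ e₃ * m₃)
          = p ^ (e₁ + e₂ + e₃) * (m₁ * m₂ * m₃) from by rw [pow_add, pow_add]; ring]
      rw [fmult copP, ppe, ihm]
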